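/- Let X be a compact subset of ℂ with 0 ∉ X. If the set of polynomial functions p(x) is dense in C(X) (continuous complex-valued functions on X with the sup norm), then the set of functions of the form p(1/x), where p is a polynomial, is also dense in C(X). -/

import Mathlib

open Polynomial Set Metric Bornology unitInterval

namespace Stmt0Aux

/-- Geometric-series identity: pole-pushing base case. -/
lemma base_id (w a : ℂ) (ha : a ≠ 0) (hwa : w - a ≠ 0) (n : ℕ) :
    (w - a)⁻¹ - ∑ k ∈ Finset.range n, (-(a⁻¹ ^ (k + 1))) * w ^ k
      = (w / a) ^ n * (w - a)⁻¹ := by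
  induction n with
  | zero => simp
  | succ n ih =>
    rw [Finset.sum_range_succ, ← sub_sub, ih]
    field_simp
    ring_nf
    rw [mul_assoc (w ^ n) a, mul_inv_cancel₀ ha]
    ring

/-- Geometric-series identity: pole-pushing induction step. -/
lemma key_id (w a b : ℂ) (hwa : w - a ≠ 0) (hwb : w - b ≠ 0) (n : ℕ) :
    (w - b)⁻¹ - ∑ k ∈ Finset.range n, (b - a) ^ k * ((w - a)⁻¹) ^ (k + 1)
      = ((b - a) / (w - a)) ^ n * (w - b)⁻¹ := by
  induction n with
  | zero => simp
  | succ n ih =>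
    rw [Finset.sum_range_succ, ← sub_sub, ih]
    rw [div_pow, div_pow, pow_succ, pow_succ, inv_pow]
    field_simp
    ring

variable {X : Set ℂ} [CompactSpace X]

/-- The function `x ↦ x⁻¹` as a continuous map on `X`. -/
noncomputable def uu (hX : ∀ x : X, (x : ℂ) ≠ 0) : C(X, ℂ) :=
  ⟨fun x => (x : ℂ)⁻¹, continuous_subtype_val.inv₀ hX⟩

@[simp] lemma uu_apply (hX : ∀ x : X, (x : ℂ) ≠ 0) (x : X) :
    uu hX x = (x : ℂ)⁻¹ := rfl

/-- The function `x ↦ (x⁻¹ - a)⁻¹` as a continuous map on `X`. -/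
noncomputable def gm (hX : ∀ x : X, (x : ℂ) ≠ 0) (a : ℂ)
    (ha : ∀ x : X, (x : ℂ)⁻¹ - a ≠ 0) : C(X, ℂ) :=
  ⟨fun x => ((x : ℂ)⁻¹ - a)⁻¹,
    ((continuous_subtype_val.inv₀ hX).sub continuous_const).inv₀ ha⟩

@[simp] lemma gm_apply (hX : ∀ x : X, (x : ℂ) ≠ 0) (a : ℂ)
    (ha : ∀ x : X, (x : ℂ)⁻¹ - a ≠ 0) (x : X) :
    gm hX a ha x = ((x : ℂ)⁻¹ - a)⁻¹ := rfl

lemma gm_congr (hX : ∀ x : X, (x : ℂ) ≠ 0) {a a' : ℂ} (h : a = a')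
    (ha : ∀ x : X, (x : ℂ)⁻¹ - a ≠ 0) (ha' : ∀ x : X, (x : ℂ)⁻¹ - a' ≠ 0) :
    gm hX a ha = gm hX a' ha' := by subst h; rfl

lemma exists_pow_mul_lt {C δ : ℝ} (hC : 0 ≤ C) (hδ : 0 < δ) :
    ∃ n : ℕ, (1 / 2 : ℝ) ^ n * C < δ := by
  rcases eq_or_lt_of_le hC with h | h
  · exact ⟨0, by simp [← h, hδ]⟩
  · obtain ⟨n, hn⟩ := exists_pow_lt_of_lt_one (div_pos hδ h) (by norm_num : (1 / 2 : ℝ) < 1)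
    exact ⟨n, by rwa [lt_div_iff₀ h] at hn⟩

lemma mem_of_approx {B : Subalgebra ℂ C(X, ℂ)} (hBc : IsClosed (B : Set C(X, ℂ)))
    {g : C(X, ℂ)} (h : ∀ δ : ℝ, 0 < δ → ∃ s ∈ B, dist g s ≤ δ) : g ∈ B := by
  rw [← SetLike.mem_coe, ← hBc.closure_eq, Metric.mem_closure_iff]
  intro ε hε
  obtain ⟨s, hs, hds⟩ := h (ε / 2) (by positivity)
  exact ⟨s, SetLike.mem_coe.mpr hs, hds.trans_lt (by linarith)⟩

/-- Pole pushing step: if `x ↦ (x⁻¹-a)⁻¹` belongs to the closed subalgebra `B` and `b` is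
close enough to `a`, then `x ↦ (x⁻¹-b)⁻¹` belongs to `B` too. -/
lemma step (hX : ∀ x : X, (x : ℂ) ≠ 0) {B : Subalgebra ℂ C(X, ℂ)}
    (hBc : IsClosed (B : Set C(X, ℂ))) {a b : ℂ}
    (ha : ∀ x : X, (x : ℂ)⁻¹ - a ≠ 0) (hga : gm hX a ha ∈ B)
    (hd : ∀ x : X, ‖b - a‖ ≤ ‖(x : ℂ)⁻¹ - a‖ / 2)
    (hb : ∀ x : X, (x : ℂ)⁻¹ - b ≠ 0) : gm hX b hb ∈ B := by
  by_cases hab : b = a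
  · subst hab; exact hga
  have hc : b - a ≠ 0 := sub_ne_zero.mpr hab
  have hcpos : 0 < ‖b - a‖ := norm_pos_iff.mpr hc
  refine mem_of_approx hBc fun δ hδ => ?_
  obtain ⟨n, hn⟩ := exists_pow_mul_lt (le_of_lt (inv_pos.mpr hcpos)) hδ
  refine ⟨∑ k ∈ Finset.range n, (b - a) ^ k • gm hX a ha ^ (k + 1), ?_, ?_⟩
  · exact Subalgebra.sum_mem B fun k _ => Subalgebra.smul_mem B (Subalgebra.pow_mem B hga _) _
  · refine le_trans ?_ hn.le
    rw [ContinuousMap.dist_le (by positivity)]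
    intro x
    have h1 : (∑ k ∈ Finset.range n, (b - a) ^ k • gm hX a ha ^ (k + 1)) x
        = ∑ k ∈ Finset.range n, (b - a) ^ k * (((x : ℂ)⁻¹ - a)⁻¹) ^ (k + 1) := by
      simp [smul_eq_mul]
    rw [dist_eq_norm, h1, gm_apply, key_id _ _ _ (ha x) (hb x) n, norm_mul, norm_pow, norm_div]
    have hwa : 0 < ‖(x : ℂ)⁻¹ - a‖ := norm_pos_iff.mpr (ha x)
    have hρ : ‖b - a‖ / ‖(x : ℂ)⁻¹ - a‖ ≤ 1 / 2 := by
      rw [div_le_div_iff₀ hwa (by norm_num)]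
      linarith [hd x]
    have hwb : ‖b - a‖ ≤ ‖(x : ℂ)⁻¹ - b‖ := by
      have h3 := norm_sub_norm_le ((x : ℂ)⁻¹ - a) (b - a)
      rw [show (x : ℂ)⁻¹ - a - (b - a) = (x : ℂ)⁻¹ - b by ring] at h3
      linarith [hd x]
    have h4 : ‖((x : ℂ)⁻¹ - b)⁻¹‖ ≤ ‖b - a‖⁻¹ := by
      rw [norm_inv]
      exact inv_anti₀ hcpos hwb
    exact mul_le_mul (pow_le_pow_left₀ (by positivity) hρ n) h4 (norm_nonneg _) (by positivity)

/-- Pole pushing base case: for `a` large, `x ↦ (x⁻¹-a)⁻¹` lies in the closed subalgebra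
generated by `x ↦ x⁻¹`. -/
lemma base (hX : ∀ x : X, (x : ℂ) ≠ 0) {B : Subalgebra ℂ C(X, ℂ)}
    (hBc : IsClosed (B : Set C(X, ℂ))) (hu : uu hX ∈ B) {a : ℂ} (ha0 : a ≠ 0)
    (hbig : ∀ x : X, ‖(x : ℂ)⁻¹‖ ≤ ‖a‖ / 2)
    (ha : ∀ x : X, (x : ℂ)⁻¹ - a ≠ 0) : gm hX a ha ∈ B := by
  have hapos : 0 < ‖a‖ := norm_pos_iff.mpr ha0
  refine mem_of_approx hBc fun δ hδ => ?_
  obtain ⟨n, hn⟩ := exists_pow_mul_lt (le_of_lt (by positivity : (0:ℝ) < (‖a‖ / 2)⁻¹)) hδ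
  refine ⟨∑ k ∈ Finset.range n, (-(a⁻¹ ^ (k + 1))) • uu hX ^ k, ?_, ?_⟩
  · exact Subalgebra.sum_mem B fun k _ => Subalgebra.smul_mem B (Subalgebra.pow_mem B hu _) _
  · refine le_trans ?_ hn.le
    rw [ContinuousMap.dist_le (by positivity)]
    intro x
    have h1 : (∑ k ∈ Finset.range n, (-(a⁻¹ ^ (k + 1))) • uu hX ^ k) x
        = ∑ k ∈ Finset.range n, (-(a⁻¹ ^ (k + 1))) * ((x : ℂ))⁻¹ ^ k := by
      simp [smul_eq_mul]
    rw [dist_eq_norm, h1, gm_apply, base_id _ _ ha0 (ha x) n, norm_mul, norm_pow, norm_div]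
    have hσ : ‖(x : ℂ)⁻¹‖ / ‖a‖ ≤ 1 / 2 := by
      rw [div_le_div_iff₀ hapos (by norm_num)]
      linarith [hbig x]
    have hwa : ‖a‖ / 2 ≤ ‖(x : ℂ)⁻¹ - a‖ := by
      have h3 := norm_sub_norm_le a ((x : ℂ)⁻¹)
      rw [show ‖a - (x:ℂ)⁻¹‖ = ‖(x:ℂ)⁻¹ - a‖ from norm_sub_rev _ _] at h3
      linarith [hbig x]
    have h4 : ‖((x : ℂ)⁻¹ - a)⁻¹‖ ≤ (‖a‖ / 2)⁻¹ := by
      rw [norm_inv]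
      exact inv_anti₀ (by positivity) hwa
    exact mul_le_mul (pow_le_pow_left₀ (by positivity) hσ n) h4 (norm_nonneg _) (by positivity)

/-- Pole pushing along a path avoiding `Y = X⁻¹`. -/
lemma chain (hX : ∀ x : X, (x : ℂ) ≠ 0) [Nonempty X] {B : Subalgebra ℂ C(X, ℂ)}
    (hBc : IsClosed (B : Set C(X, ℂ))) {b a : ℂ} (γ : Path b a)
    (hγ : ∀ t, ∀ x : X, (x : ℂ)⁻¹ ≠ γ t)
    (hgb : ∀ hhb : (∀ x : X, (x : ℂ)⁻¹ - b ≠ 0), gm hX b hhb ∈ B)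
    (hha : ∀ x : X, (x : ℂ)⁻¹ - a ≠ 0) : gm hX a hha ∈ B := by
  set Y : Set ℂ := Set.range fun x : X => (x : ℂ)⁻¹ with hYdef
  have hYne : Y.Nonempty := Set.range_nonempty _
  have hYcl : IsClosed Y := (isCompact_range (continuous_subtype_val.inv₀ hX)).isClosed
  have hne : ∀ t, ∀ x : X, (x : ℂ)⁻¹ - γ t ≠ 0 := fun t x => sub_ne_zero.mpr (hγ t x)
  have hdpos : ∀ t, 0 < infDist (γ t) Y := fun t =>
    (hYcl.notMem_iff_infDist_pos hYne).mp (by rintro ⟨x, hx⟩; exact hγ t x hx)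
  have hdle : ∀ t (x : X), infDist (γ t) Y ≤ ‖(x : ℂ)⁻¹ - γ t‖ := fun t x => by
    calc infDist (γ t) Y ≤ dist (γ t) ((x : ℂ)⁻¹) := infDist_le_dist_of_mem ⟨x, rfl⟩
      _ = ‖(x : ℂ)⁻¹ - γ t‖ := by rw [dist_eq_norm, norm_sub_rev]
  have tri : ∀ (c c' : ℂ) (x : X), ‖(x : ℂ)⁻¹ - c‖ - ‖c' - c‖ ≤ ‖(x : ℂ)⁻¹ - c'‖ :=
    fun c c' x => by
      have h := norm_sub_norm_le ((x : ℂ)⁻¹ - c) (c' - c)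
      rwa [show (x : ℂ)⁻¹ - c - (c' - c) = (x : ℂ)⁻¹ - c' by ring] at h
  set T : Set unitInterval := {t | gm hX (γ t) (hne t) ∈ B} with hTdef
  have hTopen : IsOpen T := by
    rw [Metric.isOpen_iff]
    intro t ht
    obtain ⟨δ, hδ0, hδ⟩ := Metric.continuousAt_iff.mp (γ.continuous.continuousAt)
      (infDist (γ t) Y / 3) (by linarith [hdpos t])
    refine ⟨δ, hδ0, fun s hs => ?_⟩
    have h1 : ‖γ s - γ t‖ < infDist (γ t) Y / 3 := by
      rw [← dist_eq_norm]; exact hδ hs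
    refine step hX hBc (hne t) ht (fun x => ?_) (hne s)
    have h2 := hdle t x
    have h5 := hdpos t
    linarith
  have hTclosed : IsClosed T := by
    rw [← isOpen_compl_iff]
    rw [Metric.isOpen_iff]
    intro t ht
    obtain ⟨δ, hδ0, hδ⟩ := Metric.continuousAt_iff.mp (γ.continuous.continuousAt)
      (infDist (γ t) Y / 3) (by linarith [hdpos t])
    refine ⟨δ, hδ0, fun s hs => fun hsT => ht ?_⟩
    have h1 : ‖γ s - γ t‖ < infDist (γ t) Y / 3 := by
      rw [← dist_eq_norm]; exact hδ hs
    refine step hX hBc (hne s) hsT (fun x => ?_) (hne t)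
    have h2 := hdle t x
    have h3 := tri (γ t) (γ s) x
    have h4 : ‖γ t - γ s‖ = ‖γ s - γ t‖ := norm_sub_rev _ _
    have h5 := hdpos t
    linarith
  have hT0 : (0 : unitInterval) ∈ T := by
    have hb0 : ∀ x : X, (x : ℂ)⁻¹ - b ≠ 0 := γ.source ▸ hne 0
    have := hgb hb0
    simpa only [hTdef, mem_setOf_eq, gm_congr hX γ.source.symm hb0 (hne 0)] using this
  have hTuniv : T = univ := IsClopen.eq_univ ⟨hTclosed, hTopen⟩ ⟨0, hT0⟩
  have h1 : (1 : unitInterval) ∈ T := hTuniv ▸ mem_univ _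
  have : gm hX (γ 1) (hne 1) ∈ B := h1
  rwa [gm_congr hX γ.target (hne 1) hha] at this

end Stmt0Aux

open Stmt0Aux Polynomial Set Metric Bornology in
/-- Let `X` be a compact subset of `ℂ` with `0 ∉ X`.  If the polynomial
functions are dense in `C(X, ℂ)`, then the functions `x ↦ p(x⁻¹)` (`p` a polynomial)
are also dense in `C(X, ℂ)`. -/
theorem stmt_0 (X : Set ℂ) [CompactSpace X] (h0 : (0 : ℂ) ∉ X)
    (hdense : Dense {f : C(X, ℂ) | ∃ p : Polynomial ℂ, ∀ x : X, f x = p.eval (x : ℂ)}) :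
    Dense {f : C(X, ℂ) | ∃ p : Polynomial ℂ, ∀ x : X, f x = p.eval ((x : ℂ)⁻¹)} := by
  -- trivial case: `X = ∅`
  rcases X.eq_empty_or_nonempty with hXe | hXne
  · have : {f : C(X, ℂ) | ∃ p : Polynomial ℂ, ∀ x : X, f x = p.eval ((x : ℂ)⁻¹)} = univ := by
      refine eq_univ_of_forall fun f => ⟨0, fun x => absurd x.2 (by simp [hXe])⟩
    rw [this]
    exact dense_univ
  have : Nonempty X := hXne.to_subtype
  have hXc : IsCompact X := isCompact_iff_compactSpace.mpr ‹_›
  have hXcl : IsClosed X := hXc.isClosed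
  have hX : ∀ x : X, (x : ℂ) ≠ 0 := fun x hx => h0 (hx ▸ x.2)
  -- the basic continuous maps
  set u : C(X, ℂ) := uu hX with hu_def
  set v : C(X, ℂ) := ⟨fun x => (x : ℂ), continuous_subtype_val⟩ with hv_def
  set Ad : Subalgebra ℂ C(X, ℂ) := Algebra.adjoin ℂ {u} with hAd_def
  set B : Subalgebra ℂ C(X, ℂ) := Ad.topologicalClosure with hB_def
  have hBc : IsClosed (B : Set C(X, ℂ)) := Subalgebra.isClosed_topologicalClosure Ad
  have huB : u ∈ B := Ad.le_topologicalClosure (Algebra.self_mem_adjoin_singleton ℂ u)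
  -- identification of the two polynomial sets with subalgebras
  have hS : {f : C(X, ℂ) | ∃ p : Polynomial ℂ, ∀ x : X, f x = p.eval ((x : ℂ)⁻¹)}
      = (Ad : Set C(X, ℂ)) := by
    ext f
    simp only [mem_setOf_eq, SetLike.mem_coe, hAd_def,
      Algebra.adjoin_singleton_eq_range_aeval, AlgHom.mem_range]
    constructor
    · rintro ⟨p, hp⟩
      exact ⟨p, ContinuousMap.ext fun x => by
        rw [Polynomial.aeval_continuousMap_apply]; exact (hp x).symm⟩
    · rintro ⟨p, rfl⟩
      exact ⟨p, fun x => Polynomial.aeval_continuousMap_apply p u x⟩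
  have hSp : {f : C(X, ℂ) | ∃ p : Polynomial ℂ, ∀ x : X, f x = p.eval (x : ℂ)}
      = ((Algebra.adjoin ℂ {v} : Subalgebra ℂ C(X, ℂ)) : Set C(X, ℂ)) := by
    ext f
    simp only [mem_setOf_eq, SetLike.mem_coe,
      Algebra.adjoin_singleton_eq_range_aeval, AlgHom.mem_range]
    constructor
    · rintro ⟨p, hp⟩
      exact ⟨p, ContinuousMap.ext fun x => by
        rw [Polynomial.aeval_continuousMap_apply]; exact (hp x).symm⟩
    · rintro ⟨p, rfl⟩
      exact ⟨p, fun x => Polynomial.aeval_continuousMap_apply p v x⟩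
  -- main goal reduces to `v ∈ B`
  suffices hvB : v ∈ B by
    rw [hS, dense_iff_closure_eq, ← Subalgebra.topologicalClosure_coe, ← hB_def]
    apply eq_univ_of_univ_subset
    have h2 : Algebra.adjoin ℂ {v} ≤ B := Algebra.adjoin_le (by simpa using hvB)
    have h3 : (Algebra.adjoin ℂ {v}).topologicalClosure ≤ B :=
      Subalgebra.topologicalClosure_minimal h2 hBc
    have h4 : closure ((Algebra.adjoin ℂ {v} : Subalgebra ℂ C(X, ℂ)) : Set C(X, ℂ)) = univ := by
      rw [← hSp]; exact hdense.closure_eq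
    calc (univ : Set C(X, ℂ))
        = closure ((Algebra.adjoin ℂ {v} : Subalgebra ℂ C(X, ℂ)) : Set C(X, ℂ)) := h4.symm
      _ = (((Algebra.adjoin ℂ {v}).topologicalClosure : Subalgebra ℂ C(X, ℂ)) : Set C(X, ℂ)) :=
          (Subalgebra.topologicalClosure_coe _)
      _ ⊆ (B : Set C(X, ℂ)) := h3
  -- bounds for `X`
  obtain ⟨M0, hM0⟩ := isBounded_iff_forall_norm_le.mp hXc.isBounded
  set M : ℝ := max M0 1 with hM_def
  have hM1 : (0 : ℝ) < M := lt_of_lt_of_le one_pos (le_max_right _ _)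
  have hMx : ∀ x : X, ‖(x : ℂ)‖ ≤ M := fun x => (hM0 _ x.2).trans (le_max_left _ _)
  obtain ⟨r, hr0, hrball⟩ := Metric.isOpen_iff.mp hXcl.isOpen_compl 0 h0
  have hrX : ∀ x : X, r ≤ ‖(x : ℂ)‖ := by
    intro x
    by_contra h
    exact (hrball (by simpa [mem_ball_zero_iff] using not_le.mp h)) x.2
  have hrM : r ≤ M := (hrX ⟨_, hXne.some_mem⟩).trans (hMx ⟨_, hXne.some_mem⟩)
  -- a polynomial small on `X ∪ {0}` and big at `z₀ := r/2`
  set z₀ : ℂ := ((r / 2 : ℝ) : ℂ) with hz₀_def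
  have hz₀norm : ‖z₀‖ = r / 2 := by
    rw [hz₀_def, Complex.norm_real, Real.norm_eq_abs, abs_of_pos (by positivity)]
  have hz₀X : z₀ ∉ X := fun h => by
    have := hrX ⟨z₀, h⟩
    rw [hz₀norm] at this
    linarith
  have hz₀0 : z₀ ≠ 0 := by
    simp only [hz₀_def, ne_eq, Complex.ofReal_eq_zero]
    positivity
  have hgz : ∀ x : X, (x : ℂ) - z₀ ≠ 0 := fun x h =>
    hz₀X (by rw [sub_eq_zero] at h; exact h ▸ x.2)
  set gz : C(X, ℂ) := ⟨fun x => ((x : ℂ) - z₀)⁻¹,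
    ((continuous_subtype_val.sub continuous_const).inv₀ hgz)⟩ with hgz_def
  set ε₁ : ℝ := r / (16 * M * (M + r)) with hε₁_def
  have hε₁0 : 0 < ε₁ := by positivity
  obtain ⟨fg, hfgS, hfg⟩ := Metric.mem_closure_iff.mp (hdense gz) ε₁ hε₁0
  obtain ⟨p, hp⟩ := hfgS
  have hpx : ∀ x : X, ‖p.eval (x : ℂ) - ((x : ℂ) - z₀)⁻¹‖ < ε₁ := fun x => by
    have h := ContinuousMap.dist_apply_le_dist (f := gz) (g := fg) x
    have : dist (gz x) (fg x) < ε₁ := lt_of_le_of_lt h hfg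
    rw [hp x] at this
    rw [← norm_sub_rev]
    simpa [dist_eq_norm, hgz_def] using this
  set A : Polynomial ℂ := Polynomial.C (2 / z₀) * Polynomial.X *
    ((Polynomial.X - Polynomial.C z₀) * p - 1) with hA_def
  have hA0 : A.eval 0 = 0 := by simp [hA_def]
  have hAz₀ : ‖A.eval z₀‖ = 2 := by
    have : A.eval z₀ = -2 := by
      simp only [hA_def, Polynomial.eval_mul, Polynomial.eval_C, Polynomial.eval_X,
        Polynomial.eval_sub, Polynomial.eval_one]
      field_simp
      ring
    rw [this]
    simp
  have hAX : ∀ z ∈ X, ‖A.eval z‖ ≤ 1 / 2 := by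
    intro z hz
    set x : X := ⟨z, hz⟩ with hx_def
    have h1 : A.eval z = (2 / z₀) * z * ((z - z₀) * ((p.eval z) - (z - z₀)⁻¹)) := by
      simp only [hA_def, Polynomial.eval_mul, Polynomial.eval_C, Polynomial.eval_X,
        Polynomial.eval_sub, Polynomial.eval_one]
      have h2 : (z - z₀) ≠ 0 := hgz x
      congr 1
      rw [mul_sub, mul_inv_cancel₀ h2]
    rw [h1]
    have h2 : ‖(2 : ℂ) / z₀‖ = 4 / r := by
      rw [norm_div, hz₀norm]
      rw [div_div_eq_mul_div]
      norm_num
    have h3 : ‖z - z₀‖ ≤ M + r := by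
      calc ‖z - z₀‖ ≤ ‖z‖ + ‖z₀‖ := norm_sub_le _ _
        _ ≤ M + r := by
            have := hMx x
            rw [hz₀norm]
            simp only [hx_def] at this
            linarith
    have h4 : ‖p.eval z - (z - z₀)⁻¹‖ ≤ ε₁ := (hpx x).le
    rw [norm_mul, norm_mul, norm_mul, h2]
    calc 4 / r * ‖z‖ * (‖z - z₀‖ * ‖p.eval z - (z - z₀)⁻¹‖)
        ≤ 4 / r * M * ((M + r) * ε₁) := by
          have hnz : ‖z‖ ≤ M := hMx x
          gcongr
      _ = 4 * M * (M + r) / (16 * M * (M + r)) := by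
          rw [hε₁_def]; field_simp
      _ ≤ 1 / 2 := by
          rw [div_le_div_iff₀ (by positivity) (by norm_num)]
          nlinarith
  -- the connected component of `z₀` in `ℂ \ (X ∪ {0})` is unbounded
  set W : Set ℂ := {z : ℂ | z ∉ X ∧ z ≠ 0} with hW_def
  have hWopen : IsOpen W := by
    have : W = Xᶜ ∩ {(0 : ℂ)}ᶜ := by
      ext z; simp [hW_def, and_comm]
    rw [this]
    exact hXcl.isOpen_compl.inter isOpen_compl_singleton
  have hz₀W : z₀ ∈ W := ⟨hz₀X, hz₀0⟩
  set cc : Set ℂ := connectedComponentIn W z₀ with hcc_def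
  have hccopen : IsOpen cc := hWopen.connectedComponentIn
  have hccsub : cc ⊆ W := connectedComponentIn_subset W z₀
  have hz₀cc : z₀ ∈ cc := mem_connectedComponentIn hz₀W
  have hccconn : IsConnected cc := isConnected_connectedComponentIn_iff.mpr hz₀W
  have hfrontier : frontier cc ⊆ X ∪ {0} := by
    intro z hzf
    by_contra hzX
    have hzW : z ∈ W := by
      simp only [mem_union, not_or] at hzX
      exact ⟨hzX.1, by simpa using hzX.2⟩
    have hzcl : z ∈ closure cc := frontier_subset_closure hzf
    have hznot : z ∉ cc := by
      intro h
      rw [hccopen.frontier_eq] at hzf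
      exact hzf.2 h
    obtain ⟨y, hy1, hy2⟩ := mem_closure_iff.mp hzcl (connectedComponentIn W z)
      (hWopen.connectedComponentIn) (mem_connectedComponentIn hzW)
    have e1 : connectedComponentIn W z = connectedComponentIn W y := connectedComponentIn_eq hy1
    have e2 : cc = connectedComponentIn W y := connectedComponentIn_eq hy2
    have hz3 : z ∈ connectedComponentIn W z := mem_connectedComponentIn hzW
    rw [e1] at hz3
    rw [← e2] at hz3
    exact hznot hz3
  have hnb : ¬ IsBounded cc := by
    intro hbd
    have hmax := Complex.norm_le_of_forall_mem_frontier_norm_le (f := fun z => A.eval z) hbd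
      ((A.differentiable).diffContOnCl)
      (fun z hz => by
        rcases hfrontier hz with h | h
        · exact hAX z h
        · simp only [mem_singleton_iff] at h
          subst h
          simp only [hA0]
          norm_num)
      (subset_closure hz₀cc)
    rw [hAz₀] at hmax
    linarith
  have hbig : ∀ R : ℝ, ∃ z ∈ cc, R < ‖z‖ := by
    intro R
    by_contra h
    push_neg at h
    exact hnb (isBounded_iff_forall_norm_le.mpr ⟨R, h⟩)
  -- the inverted component
  set D : Set ℂ := (fun z : ℂ => z⁻¹) '' cc with hD_def
  have hccpc : IsPathConnected cc := (hccopen.isConnected_iff_isPathConnected).mp hccconn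
  have hDpc : IsPathConnected D :=
    hccpc.image' (fun z hz => (continuousAt_inv₀ (hccsub hz).2).continuousWithinAt)
  have hDnotY : ∀ w ∈ D, ∀ x : X, (x : ℂ)⁻¹ ≠ w := by
    rintro w ⟨z, hzcc, rfl⟩ x hxw
    have hzz : z ≠ 0 := (hccsub hzcc).2
    have : (x : ℂ) = z := by
      have := congrArg (fun t : ℂ => t⁻¹) hxw
      simpa [inv_inv] using this
    exact (hccsub hzcc).1 (this ▸ x.2)
  set bb : ℂ := z₀⁻¹ with hbb_def
  have hbbD : bb ∈ D := ⟨z₀, hz₀cc, rfl⟩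
  have hbb0 : bb ≠ 0 := inv_ne_zero hz₀0
  have hbbnorm : ‖bb‖ = 2 / r := by
    rw [hbb_def, norm_inv, hz₀norm]
    rw [inv_div]
  have hbbbig : ∀ x : X, ‖(x : ℂ)⁻¹‖ ≤ ‖bb‖ / 2 := fun x => by
    rw [norm_inv, hbbnorm]
    have h1 := hrX x
    have hr' : r ≠ 0 := ne_of_gt hr0
    have h2 : (2:ℝ) / r / 2 = r⁻¹ := by field_simp
    rw [h2]
    exact inv_anti₀ hr0 h1
  have hgbb : ∀ hhb : (∀ x : X, (x : ℂ)⁻¹ - bb ≠ 0), gm hX bb hhb ∈ B :=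
    fun hhb => base hX hBc huB hbb0 hbbbig hhb
  -- show `v ∈ B` by approximation with `gm aa` for tiny `aa`
  refine mem_of_approx hBc fun δ hδ => ?_
  set κ : ℝ := min (1 / (2 * M)) (δ / (2 * M ^ 2 + 1)) with hκ_def
  have hκ0 : 0 < κ := lt_min (by positivity) (by positivity)
  obtain ⟨z, hzcc, hzn⟩ := hbig κ⁻¹
  have hz0 : z ≠ 0 := (hccsub hzcc).2
  set aa : ℂ := z⁻¹ with haa_def
  have haaD : aa ∈ D := ⟨z, hzcc, rfl⟩
  have haan : ‖aa‖ < κ := by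
    rw [haa_def, norm_inv]
    have h := inv_strictAnti₀ (inv_pos.mpr hκ0) hzn
    rwa [inv_inv] at h
  have haasub : ∀ x : X, (x : ℂ)⁻¹ - aa ≠ 0 := fun x =>
    sub_ne_zero.mpr (hDnotY aa haaD x)
  obtain ⟨γ, hγD⟩ := hDpc.joinedIn bb hbbD aa haaD
  have hγ : ∀ t, ∀ x : X, (x : ℂ)⁻¹ ≠ γ t := fun t x => hDnotY _ (hγD t) x
  have hgaa : gm hX aa haasub ∈ B := chain hX hBc γ hγ hgbb haasub
  refine ⟨gm hX aa haasub, hgaa, ?_⟩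
  rw [ContinuousMap.dist_le hδ.le]
  intro x
  have hxM : ‖(x : ℂ)‖ ≤ M := hMx x
  have hx0 : (0:ℝ) < ‖(x : ℂ)‖ := norm_pos_iff.mpr (hX x)
  have hxinv : M⁻¹ ≤ ‖(x : ℂ)⁻¹‖ := by
    rw [norm_inv]
    exact inv_anti₀ hx0 hxM
  have hκM : κ ≤ 1 / (2 * M) := min_le_left _ _
  have hwa : 1 / (2 * M) ≤ ‖(x : ℂ)⁻¹ - aa‖ := by
    have h1 := norm_sub_norm_le ((x : ℂ)⁻¹) aa
    have heq : M⁻¹ = 1 / (2 * M) + 1 / (2 * M) := by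
      field_simp
      ring
    linarith [lt_of_lt_of_le haan hκM]
  have hid : (x : ℂ) - ((x : ℂ)⁻¹ - aa)⁻¹ = -aa * x * ((x : ℂ)⁻¹ - aa)⁻¹ := by
    have h1 := hX x
    have h2 := haasub x
    apply mul_right_cancel₀ h2
    have e1 : ((x:ℂ) - ((x:ℂ)⁻¹ - aa)⁻¹) * ((x:ℂ)⁻¹ - aa)
        = (x:ℂ) * ((x:ℂ)⁻¹ - aa) - 1 := by
      rw [sub_mul, inv_mul_cancel₀ h2]
    have e2 : (-aa * (x:ℂ) * ((x:ℂ)⁻¹ - aa)⁻¹) * ((x:ℂ)⁻¹ - aa)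
        = -aa * (x:ℂ) := by
      rw [mul_assoc, inv_mul_cancel₀ h2, mul_one]
    rw [e1, e2, mul_sub, mul_inv_cancel₀ h1]
    ring
  rw [dist_eq_norm]
  calc ‖v x - gm hX aa haasub x‖
      = ‖-aa * (x : ℂ) * ((x : ℂ)⁻¹ - aa)⁻¹‖ := by
        rw [show v x = (x : ℂ) from rfl, gm_apply, hid]
    _ = ‖aa‖ * ‖(x : ℂ)‖ * ‖((x : ℂ)⁻¹ - aa)⁻¹‖ := by
        rw [norm_mul, norm_mul, norm_neg]
    _ ≤ κ * M * (2 * M) := by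
        have h4 : ‖((x : ℂ)⁻¹ - aa)⁻¹‖ ≤ 2 * M := by
          rw [norm_inv]
          have h5 := inv_anti₀ (show (0:ℝ) < 1 / (2 * M) by positivity) hwa
          rwa [one_div, inv_inv] at h5
        exact mul_le_mul (mul_le_mul haan.le hxM (norm_nonneg _) hκ0.le) h4
          (norm_nonneg _) (by positivity)
    _ ≤ δ := by
        have hκ2 : κ ≤ δ / (2 * M ^ 2 + 1) := min_le_right _ _
        have he : κ * M * (2 * M) = κ * (2 * M ^ 2) := by ring
        rw [he]
        calc κ * (2 * M ^ 2) ≤ (δ / (2 * M ^ 2 + 1)) * (2 * M ^ 2) := by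
              exact mul_le_mul_of_nonneg_right hκ2 (by positivity)
          _ ≤ δ := by
              rw [div_mul_eq_mul_div, div_le_iff₀ (by positivity)]
              nlinarith
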